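/- arXiv:2107.06201 — 6 statements merged into one kernel-verified Lean document; each statement's English description precedes it below -/
import Mathlib

section
/- For positive integers $r$, $s$ with $L = rs$, let $C_L$ be $1/2$ times the Laplacian of the cycle graph on $L$ vertices, and let $D$ be the $L \times L$ diagonal matrix with ones at positions $ks$ for $k = 0, \ldots, r-1$ and zeros elsewhere. Then the smallest eigenvalue of $C_L + D$ is at least $\frac{1}{8}(1 - \cos(\pi/(2s+1)))$. -/
open Matrix

/-- Half the Laplacian of the cycle graph on `L` vertices. -/
noncomputable def cycleMat (L : ℕ) : Matrix (Fin L) (Fin L) ℝ :=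
  Matrix.of fun i j =>
    if i = j then 1
    else (if (i.val + 1) % L = j.val then -(1/2 : ℝ) else 0) +
         (if (j.val + 1) % L = i.val then -(1/2 : ℝ) else 0)

/-- Diagonal matrix with ones exactly at the diagonal positions that are multiples of `s`. -/
noncomputable def periodicDiag (L s : ℕ) : Matrix (Fin L) (Fin L) ℝ :=
  Matrix.of fun i j => if i = j ∧ s ∣ i.val then 1 else 0

private lemma diag_quad (L s : ℕ) (hL0 : 0 < L) (v : Fin L → ℝ) (w : ℕ → ℝ)
    (hw : ∀ n, w n = v ⟨n % L, Nat.mod_lt n hL0⟩) :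
    ∑ i : Fin L, v i * ((periodicDiag L s).mulVec v) i
      = ∑ n ∈ Finset.range L, if s ∣ n then (w n)^2 else 0 := by
  have hwv : ∀ i : Fin L, w i.1 = v i := by
    intro i
    rw [hw]
    exact congrArg v (Fin.ext (Nat.mod_eq_of_lt i.2))
  have hmv : ∀ i : Fin L, ((periodicDiag L s).mulVec v) i = if s ∣ i.1 then v i else 0 := by
    intro i
    simp only [Matrix.mulVec, dotProduct, periodicDiag, Matrix.of_apply]
    calc ∑ j, (if i = j ∧ s ∣ i.1 then (1:ℝ) else 0) * v j
        = ∑ j, (if i = j then (if s ∣ i.1 then v j else 0) else 0) := by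
          refine Finset.sum_congr rfl fun j _ => ?_
          by_cases h1 : i = j <;> by_cases h2 : s ∣ i.1 <;> simp [h1, h2]
      _ = if s ∣ i.1 then v i else 0 := by rw [Finset.sum_ite_eq]; simp
  calc ∑ i : Fin L, v i * ((periodicDiag L s).mulVec v) i
      = ∑ i : Fin L, (fun n => if s ∣ n then (w n)^2 else 0) i.1 := by
        refine Finset.sum_congr rfl fun i _ => ?_
        rw [hmv i]
        by_cases h : s ∣ i.1 <;> simp [h, hwv i, sq]
    _ = ∑ n ∈ Finset.range L, if s ∣ n then (w n)^2 else 0 :=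
        Fin.sum_univ_eq_sum_range (fun n => if s ∣ n then (w n)^2 else 0) L

private lemma cyc_quad (L : ℕ) (hL2 : 2 ≤ L) (v : Fin L → ℝ) (w : ℕ → ℝ)
    (hw : ∀ n, w n = v ⟨n % L, Nat.mod_lt n (by omega)⟩) :
    ∑ i : Fin L, v i * ((cycleMat L).mulVec v) i
      = (∑ n ∈ Finset.range L, (w n)^2) - ∑ n ∈ Finset.range L, w n * w (n+1) := by
  have hL0 : 0 < L := by omega
  set nxt : Fin L → Fin L := fun k => ⟨(k.1+1) % L, Nat.mod_lt _ hL0⟩ with hnxt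
  have hwv : ∀ i : Fin L, w i.1 = v i := by
    intro i
    rw [hw]
    exact congrArg v (Fin.ext (Nat.mod_eq_of_lt i.2))
  have hwnxt : ∀ i : Fin L, v (nxt i) = w (i.1+1) := by
    intro i
    rw [hw]
  have hne : ∀ k : Fin L, nxt k ≠ k := by
    intro k hk
    have hv' : (k.1+1) % L = k.1 := congrArg Fin.val hk
    rcases Nat.lt_or_ge (k.1+1) L with h | h
    · rw [Nat.mod_eq_of_lt h] at hv'; omega
    · have hk1 : k.1 + 1 = L := by have := k.2; omega
      rw [hk1, Nat.mod_self] at hv'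
      omega
  have hentry : ∀ i j : Fin L, cycleMat L i j
      = (if i = j then (1:ℝ) else 0) + (if nxt i = j then -(1/2) else 0)
        + (if nxt j = i then -(1/2) else 0) := by
    intro i j
    have hval : ∀ k : Fin L, (nxt k).1 = (k.1+1) % L := fun k => rfl
    by_cases hij : i = j
    · subst hij
      simp [cycleMat, hne i]
    · simp only [cycleMat, Matrix.of_apply, if_neg hij]
      have e1 : ((i.1+1) % L = j.1) = (nxt i = j) :=
        propext ⟨fun h => Fin.ext h, fun h => congrArg Fin.val h⟩
      have e2 : ((j.1+1) % L = i.1) = (nxt j = i) :=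
        propext ⟨fun h => Fin.ext h, fun h => congrArg Fin.val h⟩
      simp only [e1, e2, zero_add]
  have hsplit : ∀ i : Fin L, ((cycleMat L).mulVec v) i
      = v i + (-(1/2)) * v (nxt i) + ∑ j : Fin L, (if nxt j = i then (-(1/2):ℝ) else 0) * v j := by
    intro i
    simp only [Matrix.mulVec, dotProduct]
    calc ∑ j, cycleMat L i j * v j
        = ∑ j, ((if i = j then (1:ℝ) else 0) * v j + (if nxt i = j then (-(1/2):ℝ) else 0) * v j
            + (if nxt j = i then (-(1/2):ℝ) else 0) * v j) := by
          refine Finset.sum_congr rfl fun j _ => ?_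
          rw [hentry i j]; ring
      _ = (∑ j, (if i = j then (1:ℝ) else 0) * v j)
          + (∑ j, (if nxt i = j then (-(1/2):ℝ) else 0) * v j)
          + ∑ j, (if nxt j = i then (-(1/2):ℝ) else 0) * v j := by
          rw [Finset.sum_add_distrib, Finset.sum_add_distrib]
      _ = v i + (-(1/2)) * v (nxt i) + ∑ j, (if nxt j = i then (-(1/2):ℝ) else 0) * v j := by
          congr 1
          congr 1
          · simp [ite_mul, Finset.sum_ite_eq]
          · simp [ite_mul, Finset.sum_ite_eq]
  have hT : ∑ i : Fin L, v i * (∑ j : Fin L, (if nxt j = i then (-(1/2):ℝ) else 0) * v j)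
      = -(1/2) * ∑ j : Fin L, v (nxt j) * v j := by
    calc ∑ i : Fin L, v i * (∑ j : Fin L, (if nxt j = i then (-(1/2):ℝ) else 0) * v j)
        = ∑ i : Fin L, ∑ j : Fin L, (if nxt j = i then v i * ((-(1/2)) * v j) else 0) := by
          refine Finset.sum_congr rfl fun i _ => ?_
          rw [Finset.mul_sum]
          refine Finset.sum_congr rfl fun j _ => ?_
          by_cases h : nxt j = i <;> simp [h]
      _ = ∑ j : Fin L, ∑ i : Fin L, (if nxt j = i then v i * ((-(1/2)) * v j) else 0) :=
          Finset.sum_comm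
      _ = ∑ j : Fin L, v (nxt j) * ((-(1/2)) * v j) := by
          refine Finset.sum_congr rfl fun j _ => ?_
          rw [Finset.sum_ite_eq]; simp
      _ = -(1/2) * ∑ j : Fin L, v (nxt j) * v j := by
          rw [Finset.mul_sum]
          refine Finset.sum_congr rfl fun j _ => ?_
          ring
  calc ∑ i : Fin L, v i * ((cycleMat L).mulVec v) i
      = ∑ i : Fin L, (v i * v i + (-(1/2)) * (v i * v (nxt i))
          + v i * (∑ j : Fin L, (if nxt j = i then (-(1/2):ℝ) else 0) * v j)) := by
        refine Finset.sum_congr rfl fun i _ => ?_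
        rw [hsplit i]; ring
    _ = (∑ i : Fin L, v i * v i) + (-(1/2)) * (∑ i : Fin L, v i * v (nxt i))
        + ∑ i : Fin L, v i * (∑ j : Fin L, (if nxt j = i then (-(1/2):ℝ) else 0) * v j) := by
        rw [Finset.sum_add_distrib, Finset.sum_add_distrib, Finset.mul_sum]
    _ = (∑ i : Fin L, v i * v i) - ∑ i : Fin L, v i * v (nxt i) := by
        rw [hT]
        have : ∑ j : Fin L, v (nxt j) * v j = ∑ i : Fin L, v i * v (nxt i) :=
          Finset.sum_congr rfl fun j _ => mul_comm _ _
        rw [this]; ring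
    _ = (∑ n ∈ Finset.range L, (w n)^2) - ∑ n ∈ Finset.range L, w n * w (n+1) := by
        congr 1
        · rw [← Fin.sum_univ_eq_sum_range (fun n => (w n)^2) L]
          refine Finset.sum_congr rfl fun i _ => ?_
          rw [hwv i]; ring
        · rw [← Fin.sum_univ_eq_sum_range (fun n => w n * w (n+1)) L]
          refine Finset.sum_congr rfl fun i _ => ?_
          rw [hwv i, hwnxt i]


private lemma sum_blocks (f : ℕ → ℝ) (r s : ℕ) :
    ∑ n ∈ Finset.range (r*s), f n
      = ∑ q ∈ Finset.range r, ∑ j ∈ Finset.range s, f (q*s+j) := by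
  induction r with
  | zero => simp
  | succ r ih =>
    rw [Nat.succ_mul r s, Finset.sum_range_add, ih, Finset.sum_range_succ]

private lemma poincare (r s : ℕ) (hs : 0 < s) (w : ℕ → ℝ) :
    ∑ n ∈ Finset.range (r*s), (w n)^2 ≤
      2*(s:ℝ) * (∑ n ∈ Finset.range (r*s), if s ∣ n then (w n)^2 else 0)
      + 2*(s:ℝ)^2 * (∑ n ∈ Finset.range (r*s), (w (n+1) - w n)^2) := by
  have key : ∀ q j, j < s → (w (q*s+j))^2 ≤
      2*(w (q*s))^2 + 2*(s:ℝ) * ∑ t ∈ Finset.range s, (w (q*s+t+1) - w (q*s+t))^2 := by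
    intro q j hj
    have htel := Finset.sum_range_sub (fun t => w (q*s+t)) j
    have hcs := sq_sum_le_card_mul_sum_sq (s := Finset.range j)
      (f := fun t => w (q*s+(t+1)) - w (q*s+t))
    rw [Finset.card_range] at hcs
    have hsub : ∑ t ∈ Finset.range j, (w (q*s+(t+1)) - w (q*s+t))^2
        ≤ ∑ t ∈ Finset.range s, (w (q*s+t+1) - w (q*s+t))^2 := by
      apply Finset.sum_le_sum_of_subset_of_nonneg (Finset.range_subset_range.mpr hj.le)
      intro n _ _; positivity
    have hD0 : (0:ℝ) ≤ ∑ t ∈ Finset.range s, (w (q*s+t+1) - w (q*s+t))^2 :=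
      Finset.sum_nonneg (fun i _ => sq_nonneg _)
    have hj' : (j:ℝ) ≤ (s:ℝ) := by exact_mod_cast hj.le
    have hj0 : (0:ℝ) ≤ (j:ℝ) := by positivity
    have heq : w (q*s+j) = w (q*s) + ∑ t ∈ Finset.range j, (w (q*s+(t+1)) - w (q*s+t)) := by
      rw [htel]; ring
    rw [heq]
    nlinarith [sq_nonneg (w (q*s) - ∑ t ∈ Finset.range j, (w (q*s+(t+1)) - w (q*s+t))),
      mul_le_mul_of_nonneg_left hsub hj0, mul_le_mul_of_nonneg_right hj' hD0]
  have hPid : ∀ q : ℕ, (∑ j ∈ Finset.range s, if s ∣ q*s+j then (w (q*s+j))^2 else 0)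
      = (w (q*s))^2 := by
    intro q
    rw [Finset.sum_eq_single_of_mem 0 (Finset.mem_range.mpr hs)]
    · simp [Nat.dvd_mul_left]
    · intro j hjmem hj0
      have hjlt := Finset.mem_range.mp hjmem
      have hnd : ¬ s ∣ q*s+j := by
        intro hdvd
        have h1 : s ∣ j := (Nat.dvd_add_right (Dvd.intro_left q rfl)).mp hdvd
        have := Nat.le_of_dvd (Nat.pos_of_ne_zero hj0) h1
        omega
      simp [hnd]
  calc ∑ n ∈ Finset.range (r*s), (w n)^2
      = ∑ q ∈ Finset.range r, ∑ j ∈ Finset.range s, (w (q*s+j))^2 := sum_blocks _ r s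
    _ ≤ ∑ q ∈ Finset.range r, ∑ j ∈ Finset.range s,
          (2*(w (q*s))^2 + 2*(s:ℝ) * ∑ t ∈ Finset.range s, (w (q*s+t+1) - w (q*s+t))^2) := by
        refine Finset.sum_le_sum fun q _ => Finset.sum_le_sum fun j hj => ?_
        exact key q j (Finset.mem_range.mp hj)
    _ = ∑ q ∈ Finset.range r, ((s:ℝ) *
          (2*(w (q*s))^2 + 2*(s:ℝ) * ∑ t ∈ Finset.range s, (w (q*s+t+1) - w (q*s+t))^2)) := by
        refine Finset.sum_congr rfl fun q _ => ?_
        rw [Finset.sum_const, Finset.card_range, nsmul_eq_mul]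
    _ = 2*(s:ℝ) * (∑ q ∈ Finset.range r, (w (q*s))^2)
        + 2*(s:ℝ)^2 * (∑ q ∈ Finset.range r, ∑ t ∈ Finset.range s, (w (q*s+t+1) - w (q*s+t))^2) := by
        rw [Finset.mul_sum, Finset.mul_sum, ← Finset.sum_add_distrib]
        refine Finset.sum_congr rfl fun q _ => ?_
        ring
    _ = 2*(s:ℝ) * (∑ n ∈ Finset.range (r*s), if s ∣ n then (w n)^2 else 0)
        + 2*(s:ℝ)^2 * (∑ n ∈ Finset.range (r*s), (w (n+1) - w n)^2) := by
        rw [sum_blocks (fun n => if s ∣ n then (w n)^2 else 0) r s,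
            sum_blocks (fun n => (w (n+1) - w n)^2) r s,
            ← Finset.sum_congr rfl fun q _ => hPid q]

private lemma final_bound (s : ℕ) (hs : 0 < s) (μ : ℝ) (hkey : 1 ≤ 4*(s:ℝ)^2 * μ) :
    (1/8) * (1 - Real.cos (Real.pi / (2 * (s : ℝ) + 1))) ≤ μ := by
  have hs1 : (1:ℝ) ≤ (s:ℝ) := by exact_mod_cast hs
  set x := Real.pi / (2*(s:ℝ)+1) with hx
  have hcos := Real.one_sub_sq_div_two_le_cos (x := x)
  have hπ : Real.pi < 3.15 := Real.pi_lt_d2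
  have hπ0 : 0 < Real.pi := Real.pi_pos
  have hπ2 : Real.pi^2 ≤ 9.9225 := by nlinarith [hπ, hπ0]
  have hxsq : x^2 = Real.pi^2 / (2*(s:ℝ)+1)^2 := by rw [hx, div_pow]
  have hnum : 4*(s:ℝ)^2 * Real.pi^2 ≤ 16*(2*(s:ℝ)+1)^2 := by
    nlinarith [mul_le_mul_of_nonneg_left hπ2 (show (0:ℝ) ≤ 4*(s:ℝ)^2 by positivity), hs1]
  have hx16 : x^2/16 ≤ 1/(4*(s:ℝ)^2) := by
    rw [hxsq, div_div, div_le_div_iff₀ (by positivity) (by positivity)]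
    nlinarith [hnum]
  have hμ4 : 1/(4*(s:ℝ)^2) ≤ μ := by
    rw [div_le_iff₀ (by positivity)]
    nlinarith [hkey]
  calc (1/8) * (1 - Real.cos x) ≤ (1/8) * (x^2/2) := by linarith
    _ = x^2/16 := by ring
    _ ≤ 1/(4*(s:ℝ)^2) := hx16
    _ ≤ μ := hμ4

/-- For `L = r * s`, the smallest eigenvalue of `C_L + D_{r,s,0}` is at least
`(1/8)(1 - cos(π/(2s+1)))`. -/
theorem stmt0 (r s : ℕ) (hr : 0 < r) (hs : 0 < s) (L : ℕ) (hL : L = r * s)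
    (μ : ℝ) (v : Fin L → ℝ) (hv : v ≠ 0)
    (heig : (cycleMat L + periodicDiag L s).mulVec v = μ • v) :
    (1/8) * (1 - Real.cos (Real.pi / (2 * (s : ℝ) + 1))) ≤ μ := by
  have hL0 : 0 < L := hL ▸ Nat.mul_pos hr hs
  rcases Nat.lt_or_ge L 2 with h1 | hL2
  · -- L = 1
    have hLeq : L = 1 := by omega
    subst hLeq
    have hs1 : s = 1 := Nat.dvd_one.mp (Dvd.intro_left r hL.symm)
    subst hs1
    have h0 := congrFun heig 0
    simp [Matrix.mulVec, dotProduct, cycleMat, periodicDiag, Fin.sum_univ_one] at h0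
    have hv0 : v 0 ≠ 0 := by
      intro h
      apply hv
      funext i
      have hi : i = 0 := Subsingleton.elim i 0
      rw [hi, h]; rfl
    have hμ : μ = 2 := by
      rcases h0 with h0 | h0
      · linarith
      · exact absurd h0 hv0
    have hcos := Real.neg_one_le_cos (Real.pi / (2 * ((1:ℕ) : ℝ) + 1))
    rw [hμ]
    linarith
  · -- 2 ≤ L
    set w : ℕ → ℝ := fun n => v ⟨n % L, Nat.mod_lt n hL0⟩ with hwdef
    have hw : ∀ n, w n = v ⟨n % L, Nat.mod_lt n hL0⟩ := fun n => rfl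
    have hwv : ∀ i : Fin L, w i.1 = v i := fun i => congrArg v (Fin.ext (Nat.mod_eq_of_lt i.2))
    set N := ∑ n ∈ Finset.range L, (w n)^2 with hNdef
    set E := ∑ n ∈ Finset.range L, (w (n+1) - w n)^2 with hEdef
    set P := ∑ n ∈ Finset.range L, (if s ∣ n then (w n)^2 else 0) with hPdef
    set S := ∑ n ∈ Finset.range L, w n * w (n+1) with hSdef
    have hNv : N = ∑ i : Fin L, v i ^ 2 := by
      rw [hNdef, ← Fin.sum_univ_eq_sum_range (fun n => (w n)^2) L]
      exact Finset.sum_congr rfl fun i _ => by rw [hwv i]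
    have h1 : ∑ i : Fin L, v i * ((cycleMat L + periodicDiag L s).mulVec v) i = μ * N := by
      rw [heig, hNv, Finset.mul_sum]
      refine Finset.sum_congr rfl fun i _ => ?_
      simp only [Pi.smul_apply, smul_eq_mul]
      ring
    have h2 : ∑ i : Fin L, v i * ((cycleMat L + periodicDiag L s).mulVec v) i
        = (∑ i : Fin L, v i * ((cycleMat L).mulVec v) i)
          + (∑ i : Fin L, v i * ((periodicDiag L s).mulVec v) i) := by
      rw [← Finset.sum_add_distrib]
      refine Finset.sum_congr rfl fun i _ => ?_
      rw [Matrix.add_mulVec]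
      simp [mul_add]
    have hC := cyc_quad L hL2 v w hw
    have hD := diag_quad L s hL0 v w hw
    have hwL : w L = w 0 := by
      rw [hw, hw]
      exact congrArg v (Fin.ext (by simp))
    have hshift : ∑ n ∈ Finset.range L, (w (n+1))^2 = N := by
      have a1 := Finset.sum_range_succ' (fun n => (w n)^2) L
      have a2 := Finset.sum_range_succ (fun n => (w n)^2) L
      have a3 := a1.symm.trans a2
      rw [hwL] at a3
      rw [hNdef]
      linarith
    have hES : E = 2*N - 2*S := by
      calc E = ∑ n ∈ Finset.range L, ((w (n+1))^2 + (w n)^2 - 2*(w n * w (n+1))) :=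
            Finset.sum_congr rfl fun n _ => by ring
        _ = (∑ n ∈ Finset.range L, (w (n+1))^2) + N - 2*S := by
            rw [Finset.sum_sub_distrib, Finset.sum_add_distrib, ← Finset.mul_sum, hNdef, hSdef]
        _ = 2*N - 2*S := by rw [hshift]; ring
    have hQ2 : μ * N = E/2 + P := by
      rw [← h1, h2, hC, hD]
      linarith
    have hPoin : N ≤ 2*(s:ℝ)*P + 2*(s:ℝ)^2*E := by
      have hp := poincare r s hs w
      rw [← hL] at hp
      exact hp
    have hE0 : (0:ℝ) ≤ E := Finset.sum_nonneg fun n _ => sq_nonneg _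
    have hP0 : (0:ℝ) ≤ P := Finset.sum_nonneg fun n _ => by positivity
    have hN0 : (0:ℝ) < N := by
      obtain ⟨i, hi⟩ := Function.ne_iff.mp hv
      have hsq : (0:ℝ) < v i ^ 2 :=
        lt_of_le_of_ne (sq_nonneg _) (Ne.symm (pow_ne_zero 2 hi))
      rw [hNv]
      exact lt_of_lt_of_le hsq
        (Finset.single_le_sum (f := fun j => v j ^ 2) (fun j _ => sq_nonneg _) (Finset.mem_univ i))
    have hs1 : (1:ℝ) ≤ (s:ℝ) := by exact_mod_cast hs
    have h4 : N ≤ 4*(s:ℝ)^2 * (E/2 + P) := by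
      nlinarith [hPoin, hE0, hP0, hs1,
        mul_nonneg (mul_nonneg (show (0:ℝ) ≤ 2*(s:ℝ) by linarith) hP0)
          (show (0:ℝ) ≤ 2*(s:ℝ)-1 by linarith)]
    have hkey : 1 ≤ 4*(s:ℝ)^2 * μ := by
      have hstep : (1:ℝ) * N ≤ (4*(s:ℝ)^2*μ) * N := by
        rw [one_mul]
        calc N ≤ 4*(s:ℝ)^2 * (E/2 + P) := h4
          _ = 4*(s:ℝ)^2 * (μ * N) := by rw [hQ2]
          _ = (4*(s:ℝ)^2*μ)*N := by ring
      exact le_of_mul_le_mul_right hstep hN0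
    exact final_bound s hs μ hkey
end

section
/- Let $L \geq 2$ and let $C_L$ be $1/2$ times the Laplacian of the cycle graph on $L$ vertices. Let $M$ be $C_L$ plus $1/2$ added to two cyclically consecutive diagonal entries (say entries $L-1$ and $0$). Then the smallest eigenvalue of $M$ is exactly $1 - \cos(\pi/(L+1))$. -/
open Matrix

/-- Diagonal matrix with a single `1` at diagonal position `a`. -/
noncomputable def cornerDiag (L a : ℕ) : Matrix (Fin L) (Fin L) ℝ :=
  Matrix.of fun i j => if i = j ∧ i.val = a then 1 else 0

noncomputable def Mmat (L : ℕ) : Matrix (Fin L) (Fin L) ℝ :=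
  cycleMat L + (1/2 : ℝ) • cornerDiag L (L - 1) + (1/2 : ℝ) • cornerDiag L 0

noncomputable def coeff (L : ℕ) (i : Fin L) : ℝ :=
  1 + (if i.val = L - 1 then (1/2:ℝ) else 0) + (if i.val = 0 then (1/2:ℝ) else 0)

noncomputable def wvec (L : ℕ) (j : Fin L) : ℝ :=
  Real.sin (((j.val : ℝ) + 1) * (Real.pi / ((L : ℝ) + 1)))

section

variable (L : ℕ) [NeZero L]

lemma val_add_one (i : Fin L) (h2 : 2 ≤ L) : ((i + 1 : Fin L)).val = (i.val + 1) % L := by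
  rw [Fin.val_add, Fin.val_one', Nat.mod_eq_of_lt (show 1 < L by omega)]

lemma val_sub_one (i : Fin L) (h2 : 2 ≤ L) : ((i - 1 : Fin L)).val = (L - 1 + i.val) % L := by
  rw [Fin.sub_def]
  simp only [Fin.val_one', Nat.mod_eq_of_lt (show 1 < L by omega)]

lemma cond1_iff (i j : Fin L) (h2 : 2 ≤ L) : ((i.val + 1) % L = j.val) ↔ j = i + 1 := by
  rw [Fin.ext_iff, val_add_one L i h2, eq_comm]

lemma cond2_iff (i j : Fin L) (h2 : 2 ≤ L) : ((j.val + 1) % L = i.val) ↔ j = i - 1 := by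
  rw [eq_sub_iff_add_eq, Fin.ext_iff, val_add_one L j h2]

lemma hne1 (i : Fin L) (h2 : 2 ≤ L) : (i + 1 : Fin L) ≠ i := by
  intro h
  have hv := Fin.ext_iff.mp h
  rw [val_add_one L i h2] at hv
  rcases Nat.lt_or_ge (i.val + 1) L with hc | hc
  · rw [Nat.mod_eq_of_lt hc] at hv; omega
  · have hL' : i.val + 1 = L := by omega
    rw [hL', Nat.mod_self] at hv; omega

lemma hne2 (i : Fin L) (h2 : 2 ≤ L) : (i - 1 : Fin L) ≠ i := by
  intro h
  have hv := Fin.ext_iff.mp h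
  rw [val_sub_one L i h2] at hv
  rcases Nat.lt_or_ge (L - 1 + i.val) L with hc | hc
  · rw [Nat.mod_eq_of_lt hc] at hv; omega
  · rw [Nat.mod_eq_sub_mod hc, Nat.mod_eq_of_lt (by omega)] at hv; omega

lemma entry_eq (i j : Fin L) (h2 : 2 ≤ L) :
    Mmat L i j = (if j = i then coeff L i else 0) +
      (if j = i + 1 then -(1/2:ℝ) else 0) + (if j = i - 1 then -(1/2:ℝ) else 0) := by
  simp only [Mmat, Matrix.add_apply, Matrix.smul_apply, cycleMat, cornerDiag, Matrix.of_apply,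
    smul_eq_mul]
  by_cases h : i = j
  · subst h
    simp only [if_pos rfl, true_and]
    rw [if_neg (Ne.symm (hne1 L i h2)), if_neg (Ne.symm (hne2 L i h2))]
    simp only [coeff]
    split_ifs <;> norm_num
  · rw [if_neg h, if_neg (show ¬(i = j ∧ i.val = L - 1) from fun hh => h hh.1),
      if_neg (show ¬(i = j ∧ i.val = 0) from fun hh => h hh.1),
      if_neg (show ¬ j = i from fun hh => h hh.symm)]
    simp only [cond1_iff L i j h2, cond2_iff L i j h2]
    ring

lemma mulVec_formula (v : Fin L → ℝ) (i : Fin L) (h2 : 2 ≤ L) :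
    (Mmat L).mulVec v i = coeff L i * v i - (1/2) * v (i+1) - (1/2) * v (i-1) := by
  unfold Matrix.mulVec dotProduct
  calc (∑ j, Mmat L i j * v j)
      = ∑ j, ((if j = i then coeff L i * v j else 0) +
          ((if j = i + 1 then -(1/2:ℝ) * v j else 0) +
           (if j = i - 1 then -(1/2:ℝ) * v j else 0))) := by
        refine Finset.sum_congr rfl fun j _ => ?_
        rw [entry_eq L i j h2]
        simp only [add_mul, ite_mul, zero_mul, add_assoc]
    _ = coeff L i * v i - (1/2) * v (i+1) - (1/2) * v (i-1) := by
        rw [Finset.sum_add_distrib, Finset.sum_add_distrib]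
        simp [Finset.sum_ite_eq']
        ring

lemma wvec_pos (j : Fin L) (h2 : 2 ≤ L) : 0 < wvec L j := by
  have hπ := Real.pi_pos
  have hL1 : (0:ℝ) < (L:ℝ) + 1 := by positivity
  have hθ : 0 < Real.pi / ((L:ℝ) + 1) := by positivity
  apply Real.sin_pos_of_pos_of_lt_pi
  · positivity
  · have hj : ((j.val : ℝ) + 1) < (L:ℝ) + 1 := by
      have := j.isLt; exact_mod_cast Nat.succ_lt_succ this
    calc ((j.val : ℝ) + 1) * (Real.pi / ((L:ℝ) + 1))
        < ((L:ℝ) + 1) * (Real.pi / ((L:ℝ) + 1)) := by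
          apply mul_lt_mul_of_pos_right hj hθ
      _ = Real.pi := by field_simp

lemma eigvec (h2 : 2 ≤ L) :
    (Mmat L).mulVec (wvec L) = (1 - Real.cos (Real.pi / ((L:ℝ)+1))) • (wvec L) := by
  set θ := Real.pi / ((L:ℝ)+1) with hθdef
  have hL1 : ((L:ℝ) + 1) ≠ 0 := by positivity
  have hLθ : (L:ℝ) * θ = Real.pi - θ := by
    rw [hθdef]; field_simp; ring
  have hcast : ((L-1:ℕ):ℝ) = (L:ℝ) - 1 := by
    have := Nat.cast_sub (show 1 ≤ L by omega) (R := ℝ)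
    simpa using this
  have hsL : Real.sin ((L:ℝ)*θ) = Real.sin θ := by rw [hLθ, Real.sin_pi_sub]
  funext i
  rw [mulVec_formula L (wvec L) i h2, Pi.smul_apply, smul_eq_mul]
  by_cases h0 : i.val = 0
  · -- i = 0
    have hp : ((i+1:Fin L)).val = 1 := by
      rw [val_add_one L i h2, h0, Nat.mod_eq_of_lt (by omega)]
    have hm : ((i-1:Fin L)).val = L - 1 := by
      rw [val_sub_one L i h2, h0, Nat.add_zero, Nat.mod_eq_of_lt (by omega)]
    have hco : coeff L i = 3/2 := by
      simp only [coeff, h0]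
      rw [if_neg (show ¬(0 = L - 1) by omega)]
      norm_num
    simp only [wvec, hp, hm, hco, h0, hcast, Nat.cast_zero, Nat.cast_one]
    rw [show ((0:ℝ)+1)*θ = θ by ring, show ((1:ℝ)+1)*θ = 2*θ by ring,
      show ((L:ℝ)-1+1)*θ = (L:ℝ)*θ by ring, hsL, Real.sin_two_mul]
    ring
  · by_cases hl : i.val = L - 1
    · -- i = L-1
      have hp : ((i+1:Fin L)).val = 0 := by
        rw [val_add_one L i h2, hl, show L - 1 + 1 = L by omega, Nat.mod_self]
      have hm : ((i-1:Fin L)).val = L - 2 := by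
        rw [val_sub_one L i h2, hl, show L - 1 + (L-1) = L + (L - 2) by omega,
          Nat.add_mod_left, Nat.mod_eq_of_lt (by omega)]
      have hco : coeff L i = 3/2 := by
        simp only [coeff, hl, if_pos rfl, if_neg (show ¬ (L-1) = 0 by omega)]
        norm_num
      have hcast2 : ((L-2:ℕ):ℝ) = (L:ℝ) - 2 := by
        have := Nat.cast_sub (show 2 ≤ L by omega) (R := ℝ)
        simpa using this
      have hs2 : Real.sin (((L:ℝ)-1)*θ) = Real.sin (2*θ) := by
        rw [show ((L:ℝ)-1)*θ = Real.pi - 2*θ by rw [sub_mul]; linarith, Real.sin_pi_sub]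
      simp only [wvec, hp, hm, hco, hl, hcast, hcast2, Nat.cast_zero, Nat.cast_one]
      rw [show ((L:ℝ)-1+1)*θ = (L:ℝ)*θ by ring, hsL, show ((0:ℝ)+1)*θ = θ by ring,
        show ((L:ℝ)-2+1)*θ = ((L:ℝ)-1)*θ by ring, hs2, Real.sin_two_mul]
      ring
    · -- interior
      have hlt : i.val + 1 < L := by have := i.isLt; omega
      have hp : ((i+1:Fin L)).val = i.val + 1 := by
        rw [val_add_one L i h2, Nat.mod_eq_of_lt hlt]
      have hm : ((i-1:Fin L)).val = i.val - 1 := by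
        rw [val_sub_one L i h2, show L - 1 + i.val = L + (i.val - 1) by omega,
          Nat.add_mod_left, Nat.mod_eq_of_lt (by omega)]
      have hco : coeff L i = 1 := by
        simp only [coeff, if_neg h0, if_neg hl]
        norm_num
      have hcast3 : ((i.val - 1 : ℕ):ℝ) = (i.val:ℝ) - 1 := by
        have := Nat.cast_sub (show 1 ≤ i.val by omega) (R := ℝ)
        simpa using this
      simp only [wvec, hp, hm, hco, hcast3, Nat.cast_add, Nat.cast_one]
      rw [show ((i.val:ℝ)+1+1)*θ = ((i.val:ℝ)+1)*θ + θ by ring,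
        show ((i.val:ℝ)-1+1)*θ = ((i.val:ℝ)+1)*θ - θ by ring,
        Real.sin_add, Real.sin_sub]
      ring


lemma lower_bound (h2 : 2 ≤ L) (μ : ℝ) (v : Fin L → ℝ) (hv : v ≠ 0)
    (heig : (Mmat L).mulVec v = μ • v) : 1 - Real.cos (Real.pi / ((L:ℝ)+1)) ≤ μ := by
  set lam := 1 - Real.cos (Real.pi / ((L:ℝ)+1)) with hlam
  have hwpos : ∀ j, 0 < wvec L j := fun j => wvec_pos L j h2
  obtain ⟨i₀, -, hmax⟩ := Finset.exists_max_image Finset.univ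
    (fun i => |v i| / wvec L i) (Finset.univ_nonempty)
  set t := |v i₀| / wvec L i₀ with ht
  have hbound : ∀ j, |v j| ≤ t * wvec L j := by
    intro j
    have := hmax j (Finset.mem_univ j)
    calc |v j| = (|v j| / wvec L j) * wvec L j :=
      (div_mul_cancel₀ _ (ne_of_gt (hwpos j))).symm
      _ ≤ t * wvec L j := mul_le_mul_of_nonneg_right this (le_of_lt (hwpos j))
  have htpos : 0 < t := by
    obtain ⟨k, hk⟩ := Function.ne_iff.mp hv
    have h1 : 0 < |v k| / wvec L k := div_pos (abs_pos.mpr hk) (hwpos k)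
    exact lt_of_lt_of_le h1 (hmax k (Finset.mem_univ k))
  set v' : Fin L → ℝ := if 0 ≤ v i₀ then v else -v with hv'
  have heig' : (Mmat L).mulVec v' = μ • v' := by
    rw [hv']
    split_ifs
    · exact heig
    · rw [Matrix.mulVec_neg, heig, smul_neg]
  have h0 : v' i₀ = t * wvec L i₀ := by
    have habs : |v i₀| = t * wvec L i₀ :=
      (div_mul_cancel₀ _ (ne_of_gt (hwpos i₀))).symm
    rw [hv']
    split_ifs with hs
    · rw [← habs, abs_of_nonneg hs]
    · rw [← habs, Pi.neg_apply, abs_of_neg (lt_of_not_ge hs)]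
  have hle : ∀ j, v' j ≤ t * wvec L j := by
    intro j
    refine le_trans ?_ (hbound j)
    rw [hv']
    split_ifs
    · exact le_abs_self _
    · exact (neg_le_abs _)
  have hA : μ * v' i₀ = coeff L i₀ * v' i₀ - (1/2) * v' (i₀+1) - (1/2) * v' (i₀-1) := by
    rw [← mulVec_formula L v' i₀ h2, heig', Pi.smul_apply, smul_eq_mul]
  have hB : lam * wvec L i₀ = coeff L i₀ * wvec L i₀ - (1/2) * wvec L (i₀+1)
      - (1/2) * wvec L (i₀-1) := by
    rw [← mulVec_formula L (wvec L) i₀ h2, eigvec L h2, Pi.smul_apply, smul_eq_mul]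
  have hkey : lam * (t * wvec L i₀) ≤ μ * (t * wvec L i₀) := by
    have h1 := hle (i₀+1)
    have h2' := hle (i₀-1)
    calc lam * (t * wvec L i₀) = t * (lam * wvec L i₀) := by ring
      _ = coeff L i₀ * (t * wvec L i₀) - (1/2) * (t * wvec L (i₀+1))
          - (1/2) * (t * wvec L (i₀-1)) := by rw [hB]; ring
      _ ≤ coeff L i₀ * v' i₀ - (1/2) * v' (i₀+1) - (1/2) * v' (i₀-1) := by
          rw [h0]; linarith
      _ = μ * v' i₀ := hA.symm
      _ = μ * (t * wvec L i₀) := by rw [h0]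
  have hpos : 0 < t * wvec L i₀ := mul_pos htpos (hwpos i₀)
  exact le_of_mul_le_mul_right (by linarith [hkey]) hpos

end

/-- For `L ≥ 2`, the smallest eigenvalue of `C_L` with `1/2` added to the two cyclically
consecutive diagonal entries `L-1` and `0` is exactly `1 - cos(π/(L+1))`. -/
theorem stmt1 (L : ℕ) (hL : 2 ≤ L) :
    IsLeast {μ : ℝ | ∃ v : Fin L → ℝ, v ≠ 0 ∧
        (cycleMat L + (1/2 : ℝ) • cornerDiag L (L - 1) + (1/2 : ℝ) • cornerDiag L 0).mulVec v
          = μ • v}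
      (1 - Real.cos (Real.pi / ((L : ℝ) + 1))) := by
  haveI : NeZero L := ⟨by omega⟩
  constructor
  · refine ⟨wvec L, ?_, ?_⟩
    · intro h
      have := congrFun h 0
      have hpos := wvec_pos L 0 hL
      rw [this] at hpos
      exact lt_irrefl 0 hpos
    · exact eigvec L hL
  · rintro μ ⟨v, hv, heig⟩
    exact lower_bound L hL μ v hv heig
end

section
/- For all real $\theta$ with $0 \leq \theta < 1$ and all real $c \geq 1$: $1 - \cos(\theta/c) \leq \frac{2}{c^2}(1 - \cos\theta)$. -/
/-- For `0 ≤ θ < 1` and `c ≥ 1`: `1 - cos(θ/c) ≤ (2/c²)(1 - cos θ)`. -/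
theorem stmt4 (θ c : ℝ) (hθ0 : 0 ≤ θ) (hθ1 : θ < 1) (hc : 1 ≤ c) :
    1 - Real.cos (θ / c) ≤ (2 / c ^ 2) * (1 - Real.cos θ) := by
  have hc0 : (0:ℝ) < c := by linarith
  have hθabs : |θ| ≤ 1 := by rw [abs_of_nonneg hθ0]; linarith
  have h1 : 1 - Real.cos (θ / c) ≤ (θ / c) ^ 2 / 2 := by
    linarith [Real.one_sub_sq_div_two_le_cos (x := θ / c)]
  have h2 : |Real.cos θ - (1 - θ ^ 2 / 2)| ≤ |θ| ^ 4 * (5 / 96) := Real.cos_bound hθabs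
  have h2' : Real.cos θ ≤ 1 - θ ^ 2 / 2 + θ ^ 4 * (5 / 96) := by
    rw [abs_of_nonneg hθ0] at h2
    have := abs_le.mp h2
    linarith [this.2]
  have hdiv : (θ / c) ^ 2 = θ ^ 2 / c ^ 2 := by ring
  have hc2 : (0:ℝ) < c ^ 2 := by positivity
  rw [div_mul_eq_mul_div]
  calc 1 - Real.cos (θ / c) ≤ θ ^ 2 / c ^ 2 / 2 := by rw [← hdiv]; exact h1
    _ ≤ 2 * (1 - Real.cos θ) / c ^ 2 := by
        rw [div_div, mul_comm (c ^ 2) 2, ← div_div]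
        gcongr
        have hθ2 : θ ^ 2 ≤ 1 := by nlinarith
        have hθ4 : θ ^ 4 ≤ θ ^ 2 := by nlinarith [sq_nonneg θ]
        nlinarith
end

section
/- If $x$, $x'$, and $y$ are integers greater than $5$ with $x \neq x'$, then $|\cos(\pi/(yx+1)) - \cos(\pi/(yx'+1))| \geq \frac{1}{y^2 x^4}$. -/
open Real
set_option maxHeartbeats 1000000

lemma key (x x' y : ℤ) (hx : 5 < x) (hy : 5 < y) (hlt : x < x') :
    1 / ((y : ℝ) ^ 2 * (x : ℝ) ^ 4) ≤
      Real.cos (Real.pi / ((y : ℝ) * (x' : ℝ) + 1)) -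
        Real.cos (Real.pi / ((y : ℝ) * (x : ℝ) + 1)) := by
  have hX : (6 : ℝ) ≤ (x : ℝ) := by exact_mod_cast hx
  have hY : (6 : ℝ) ≤ (y : ℝ) := by exact_mod_cast hy
  have hXX' : (x : ℝ) + 1 ≤ (x' : ℝ) := by exact_mod_cast hlt
  set X := (x : ℝ); set X' := (x' : ℝ); set Y := (y : ℝ)
  set p : ℝ := Y * X + 1 with hp
  set q : ℝ := Y * X' + 1 with hq
  have hp37 : (37 : ℝ) ≤ p := by nlinarith
  have hqp : p + Y ≤ q := by nlinarith
  have hp0 : 0 < p := by linarith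
  have hq0 : 0 < q := by linarith
  have hpq : p < q := by linarith
  have hpi : 0 < π := pi_pos
  set a : ℝ := π / p with ha
  set b : ℝ := π / q with hb
  have hb0 : 0 < b := by positivity
  have hba : b < a := by
    apply div_lt_div_of_pos_left hpi hp0 hpq
  have ha2 : a ≤ π / 2 := by
    rw [ha]; apply div_le_div_of_nonneg_left hpi.le (by norm_num) (by linarith)
  -- cos b - cos a = 2 sin((a+b)/2) sin((a-b)/2)
  have hcos : Real.cos b - Real.cos a = 2 * Real.sin ((a+b)/2) * Real.sin ((a-b)/2) := by
    rw [Real.cos_sub_cos]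
    have : (b - a) / 2 = -((a - b)/2) := by ring
    rw [this, Real.sin_neg]
    ring_nf
  have hs1 : 2 / π * ((a+b)/2) ≤ Real.sin ((a+b)/2) :=
    mul_le_sin (by positivity) (by linarith)
  have hs2 : 2 / π * ((a-b)/2) ≤ Real.sin ((a-b)/2) :=
    mul_le_sin (by linarith) (by linarith)
  have hlow : 2 * (2 / π * ((a+b)/2)) * (2 / π * ((a-b)/2)) ≤ Real.cos b - Real.cos a := by
    rw [hcos]
    have h1 : 0 < 2 / π * ((a+b)/2) := by positivity
    have h2 : 0 ≤ 2 / π * ((a-b)/2) := by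
      have : 0 ≤ a - b := by linarith
      positivity
    nlinarith
  have hid : 2 * (2 / π * ((a+b)/2)) * (2 / π * ((a-b)/2)) = 2 * (1/p^2 - 1/q^2) := by
    rw [ha, hb]
    field_simp
    ring
  rw [hid] at hlow
  refine le_trans ?_ hlow
  -- reduce to x' = x+1 : use r := Y*(X+1)+1 ≤ q
  set r : ℝ := Y * (X + 1) + 1 with hr
  have hrq : r ≤ q := by nlinarith
  have hr0 : 0 < r := by nlinarith
  have h1 : 1/q^2 ≤ 1/r^2 := by
    apply one_div_le_one_div_of_le (by positivity)
    nlinarith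
  have main : 1 / (Y ^ 2 * X ^ 4) ≤ 2 * (1/p^2 - 1/r^2) := by
    rw [div_le_iff₀ (by positivity)]
    have e : 2 * (1/p^2 - 1/r^2) = 2 * (r^2 - p^2) / (p^2 * r^2) := by
      field_simp
    rw [e, div_mul_eq_mul_div, le_div_iff₀ (by positivity)]
    have hrp : r^2 - p^2 = Y * (2*Y*X + Y + 2) := by rw [hr, hp]; ring
    have hp2 : p^2 ≤ 4*Y^2*X^2 := by nlinarith
    have hr2 : r^2 ≤ 4*Y^2*X^2 := by nlinarith
    have hpr : p^2 * r^2 ≤ 16*Y^4*X^4 := by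
      nlinarith [mul_le_mul hp2 hr2 (by positivity) (by positivity : (0:ℝ) ≤ 4*Y^2*X^2)]
    have hfinal : 16*Y^4*X^4 ≤ 2*(r^2-p^2)*(Y^2*X^4) := by
      rw [hrp]
      nlinarith [mul_le_mul_of_nonneg_left hX (show (0:ℝ) ≤ 4*Y^4*X^4 by positivity),
        mul_nonneg (mul_nonneg (by positivity : (0:ℝ) ≤ Y^3) (by positivity : (0:ℝ) ≤ X^4)) (by norm_num : (0:ℝ) ≤ 4)]
    linarith
  calc 1 / (Y ^ 2 * X ^ 4) ≤ 2 * (1/p^2 - 1/r^2) := main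
    _ ≤ 2 * (1/p^2 - 1/q^2) := by linarith

/-- If `x`, `x'`, `y` are integers greater than `5` and `x ≠ x'`, then
`|cos(π/(yx+1)) - cos(π/(yx'+1))| ≥ 1/(y²x⁴)`. -/
theorem stmt5 (x x' y : ℤ) (hx : 5 < x) (hx' : 5 < x') (hy : 5 < y) (hne : x ≠ x') :
    1 / ((y : ℝ) ^ 2 * (x : ℝ) ^ 4) ≤
      |Real.cos (Real.pi / ((y : ℝ) * (x : ℝ) + 1)) -
        Real.cos (Real.pi / ((y : ℝ) * (x' : ℝ) + 1))| := by
  rcases lt_or_gt_of_ne hne with h | h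
  · have := key x x' y hx hy h
    calc 1 / ((y : ℝ) ^ 2 * (x : ℝ) ^ 4)
        ≤ Real.cos (Real.pi / ((y : ℝ) * (x' : ℝ) + 1)) -
            Real.cos (Real.pi / ((y : ℝ) * (x : ℝ) + 1)) := this
      _ ≤ |Real.cos (Real.pi / ((y : ℝ) * (x : ℝ) + 1)) -
            Real.cos (Real.pi / ((y : ℝ) * (x' : ℝ) + 1))| := by
          rw [abs_sub_comm]; exact le_abs_self _
  · have hkey := key x' x y hx' hy h
    have hmono : 1 / ((y : ℝ) ^ 2 * (x : ℝ) ^ 4) ≤ 1 / ((y : ℝ) ^ 2 * (x' : ℝ) ^ 4) := by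
      have hx'0 : (5 : ℝ) < (x' : ℝ) := by exact_mod_cast hx'
      have hy0 : (5 : ℝ) < (y : ℝ) := by exact_mod_cast hy
      have hxx : (x' : ℝ) ≤ (x : ℝ) := by exact_mod_cast h.le
      apply one_div_le_one_div_of_le (by positivity)
      have : (x' : ℝ) ^ 4 ≤ (x : ℝ) ^ 4 := by
        apply pow_le_pow_left₀ (by linarith) hxx
      nlinarith
    calc 1 / ((y : ℝ) ^ 2 * (x : ℝ) ^ 4)
        ≤ 1 / ((y : ℝ) ^ 2 * (x' : ℝ) ^ 4) := hmono
      _ ≤ Real.cos (Real.pi / ((y : ℝ) * (x : ℝ) + 1)) -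
            Real.cos (Real.pi / ((y : ℝ) * (x' : ℝ) + 1)) := hkey
      _ ≤ |Real.cos (Real.pi / ((y : ℝ) * (x : ℝ) + 1)) -
            Real.cos (Real.pi / ((y : ℝ) * (x' : ℝ) + 1))| := le_abs_self _
end

section
/- Define $N(x) = 5\,n(x^R) - 2\,w(x) - 4\,(n(x^R) \bmod 2)$, where $x$ is a binary string ending in $1$, $x^R$ is its reverse, $n(z)$ is the number represented by binary string $z$, and $w(x)$ is the number of ones in $x$. Then for every binary string $x$ of length at least $2$ ending in $1$, $N(x) \geq 2^{|x|}$. -/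
/-- `n(x^R)`: the numerical value of the reverse of the binary string `x`,
i.e. the value of `x` read in little-endian order (first character = least significant bit). -/
def revVal (x : List Bool) : ℕ :=
  ∑ i : Fin x.length, if x.get i then 2 ^ (i : ℕ) else 0

lemma revVal_nil : revVal [] = 0 := rfl

lemma revVal_cons (b : Bool) (l : List Bool) :
    revVal (b :: l) = (if b then 1 else 0) + 2 * revVal l := by
  show (∑ i : Fin (l.length + 1), if (b :: l).get i then 2 ^ (i : ℕ) else 0) = _
  rw [Fin.sum_univ_succ]
  simp [revVal, Finset.mul_sum, pow_succ, mul_comm, mul_left_comm]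

lemma revVal_last (x : List Bool) (h : x.getLast? = some true) :
    2 ^ (x.length - 1) ≤ revVal x := by
  induction x with
  | nil => simp at h
  | cons b l ih =>
    cases l with
    | nil =>
      simp [List.getLast?] at h
      subst h
      simp [revVal_cons, revVal_nil]
    | cons c m =>
      rw [List.getLast?_cons_cons] at h
      have hih := ih h
      rw [revVal_cons]
      have hp : (2:ℕ) ^ ((b :: c :: m).length - 1) = 2 * 2 ^ ((c :: m).length - 1) := by
        simp [List.length_cons, pow_succ']
      rw [hp]
      simp only [List.length_cons, Nat.add_sub_cancel] at hih ⊢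
      cases b <;> simp <;> omega

lemma revVal_count (x : List Bool) : 2 ^ x.count true ≤ revVal x + 1 := by
  induction x with
  | nil => simp [revVal_nil]
  | cons b l ih =>
    rw [revVal_cons]
    cases b <;> simp [List.count_cons, pow_succ] <;> omega

lemma revVal_odd_head (b : Bool) (l : List Bool) (h : revVal (b :: l) % 2 = 1) :
    b = true := by
  cases b with
  | true => rfl
  | false => rw [revVal_cons] at h; simp at h

lemma count_last (l : List Bool) (h : l.getLast? = some true) : 1 ≤ l.count true := by
  induction l with
  | nil => simp at h
  | cons b m ih =>
    cases m with
    | nil =>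
      simp [List.getLast?] at h
      subst h
      simp
    | cons c k =>
      rw [List.getLast?_cons_cons] at h
      have := ih h
      rw [List.count_cons]
      omega

lemma two_mul_le_pow (w : ℕ) (h : 2 ≤ w) : 2 * w ≤ 2 ^ w := by
  induction w with
  | zero => omega
  | succ n ih =>
    rcases Nat.lt_or_ge n 2 with hn | hn
    · interval_cases n <;> simp_all
    · have h1 := ih hn
      have h2 : 1 ≤ 2 ^ n := Nat.one_le_two_pow
      rw [pow_succ]
      omega

/-- For every binary string `x` of length at least `2` ending in `1`,
`N(x) = 5 n(x^R) - 2 w(x) - 4 (n(x^R) mod 2) ≥ 2^|x|`, where `w(x)` is the number of ones. -/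
theorem stmt7 (x : List Bool) (hlen : 2 ≤ x.length) (hlast : x.getLast? = some true) :
    (2 : ℤ) ^ x.length ≤
      5 * (revVal x : ℤ) - 2 * (x.count true : ℤ) - 4 * ((revVal x : ℤ) % 2) := by
  set n := revVal x with hn
  set w := x.count true with hw
  have hA : 2 ^ (x.length - 1) ≤ n := revVal_last x hlast
  have hB : 2 ^ w ≤ n + 1 := revVal_count x
  have hpow : 2 ^ x.length = 2 * 2 ^ (x.length - 1) := by
    rw [← pow_succ']
    congr 1
    omega
  have hwn : w ≤ n := by
    have := Nat.lt_two_pow_self (n := w)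
    omega
  have key : 2 ^ x.length + 2 * w + 4 * (n % 2) ≤ 5 * n := by
    have h2n : 2 ^ x.length ≤ 2 * n := by rw [hpow]; omega
    rcases Nat.mod_two_eq_zero_or_one n with h0 | h1
    · omega
    · have hne : x ≠ [] := by intro h; subst h; simp at hlen
      obtain ⟨b, l, rfl⟩ := List.exists_cons_of_ne_nil hne
      have hb : b = true := revVal_odd_head b l (by rw [← hn]; exact h1)
      subst hb
      have hl : l ≠ [] := by intro h; subst h; simp at hlen
      obtain ⟨c, k, rfl⟩ := List.exists_cons_of_ne_nil hl
      have hlast' : (c :: k).getLast? = some true := by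
        rwa [List.getLast?_cons_cons] at hlast
      have hcl := count_last (c :: k) hlast'
      have hcc : (true :: c :: k).count true = (c :: k).count true + 1 := by
        simp [List.count_cons]
      have hw2 : 2 ≤ w := by rw [hw, hcc]; omega
      have h2w : 2 * w ≤ 2 ^ w := two_mul_le_pow w hw2
      have h4 : (4:ℕ) ≤ 2 ^ w := by
        calc (4:ℕ) = 2 ^ 2 := rfl
          _ ≤ 2 ^ w := Nat.pow_le_pow_right (by norm_num) hw2
      omega
  have cast1 : ((n : ℤ) % 2) = ((n % 2 : ℕ) : ℤ) := by push_cast; omega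
  rw [cast1]
  have key' : ((2:ℤ) ^ x.length) + 2 * w + 4 * ((n % 2 : ℕ) : ℤ) ≤ 5 * n := by
    exact_mod_cast key
  linarith
end

section
/- Recovering an integer from an approximate eigenvalue: let $y \geq 40$ be an integer and suppose $T, T' \in \{4, 5, \ldots, M\}$ are integers with $T \neq T'$. Define $g(T) = 1 - \cos\left(\frac{\pi}{(2T+1)y + 1}\right)$. If $E$ is a real number with $|E - g(T)| \leq \frac{1}{2 y^2 (2M+1)^4}$, then $T$ is the unique integer in $\{4, \ldots, M\}$ with $|E - g(T)| \leq \frac{1}{2 y^2 (2M+1)^4}$; i.e., $|g(T) - g(T')| \geq \frac{1}{y^2 (2M+1)^4}$ for $T \neq T'$. -/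
open Real

lemma sin_half_lt' (x : ℝ) (hx0 : 0 < x) (hx1 : x ≤ 1) : x / 2 < Real.sin x := by
  have h := Real.sin_gt_sub_cube hx0
  nlinarith [sq_nonneg x, mul_pos hx0 hx0]

set_option maxHeartbeats 1200000 in
lemma sep' (y M T T' : ℕ) (hy : 40 ≤ y) (hT4 : 4 ≤ T) (hT'M : T' ≤ M) (hlt : T < T') (hM : 4 ≤ M) :
    1 / ((y:ℝ)^2 * (2*(M:ℝ)+1)^4) <
      Real.cos (Real.pi / ((2*(T':ℝ)+1)*(y:ℝ)+1)) - Real.cos (Real.pi / ((2*(T:ℝ)+1)*(y:ℝ)+1)) := by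
  have hyR : (40:ℝ) ≤ (y:ℝ) := by exact_mod_cast hy
  have hT4R : (4:ℝ) ≤ (T:ℝ) := by exact_mod_cast hT4
  have hT'MR : (T':ℝ) ≤ (M:ℝ) := by exact_mod_cast hT'M
  have hltR : (T:ℝ) + 1 ≤ (T':ℝ) := by exact_mod_cast hlt
  have hMR : (4:ℝ) ≤ (M:ℝ) := by exact_mod_cast hM
  set a : ℝ := (2*(T:ℝ)+1)*(y:ℝ)+1 with ha_def
  set b : ℝ := (2*(T':ℝ)+1)*(y:ℝ)+1 with hb_def
  set L : ℝ := (2*(M:ℝ)+1) * (y:ℝ) with hL_def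
  have ha361 : (361:ℝ) ≤ a := by nlinarith
  have ha0 : (0:ℝ) < a := by linarith
  have hb0 : (0:ℝ) < b := by nlinarith
  have hba : a + 2*(y:ℝ) ≤ b := by nlinarith
  have hab : a < b := by linarith
  have haL : a ≤ 2 * L := by rw [hL_def]; nlinarith
  have hbL : b ≤ 2 * L := by rw [hL_def]; nlinarith
  have hL0 : (0:ℝ) < L := by rw [hL_def]; nlinarith
  have hpi3 : (3:ℝ) ≤ π := Real.pi_gt_three.le
  have hpi4 : π ≤ 4 := Real.pi_le_four
  set u : ℝ := π / b with hu_def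
  set v : ℝ := π / a with hv_def
  have hu0 : 0 < u := div_pos Real.pi_pos hb0
  have hv0 : 0 < v := div_pos Real.pi_pos ha0
  have huv : u < v := div_lt_div_of_pos_left Real.pi_pos ha0 hab
  have hv1 : v ≤ 1 := by rw [hv_def, div_le_one ha0]; linarith
  have hform : Real.cos u - Real.cos v = 2 * Real.sin ((u+v)/2) * Real.sin ((v-u)/2) := by
    rw [Real.cos_sub_cos]
    have h : (u - v)/2 = -((v-u)/2) := by ring
    rw [h, Real.sin_neg]; ring
  set s : ℝ := (u+v)/2 with hs_def
  set d : ℝ := (v-u)/2 with hd_def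
  have hs0 : 0 < s := by rw [hs_def]; linarith
  have hs1 : s ≤ 1 := by rw [hs_def]; linarith
  have hd0 : 0 < d := by rw [hd_def]; linarith
  have hd1 : d ≤ 1 := by rw [hd_def]; linarith
  have hsin_s := sin_half_lt' s hs0 hs1
  have hsin_d := sin_half_lt' d hd0 hd1
  have hus : u ≤ s := by rw [hs_def]; linarith
  have hgap : u * (v - u) / 4 < Real.cos u - Real.cos v := by
    rw [hform]
    have h1 : (s/2)*(d/2) < Real.sin s * Real.sin d :=
      mul_lt_mul hsin_s hsin_d.le (by linarith) (by linarith)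
    have h2 : u*d ≤ s*d := mul_le_mul_of_nonneg_right hus hd0.le
    have hvd : v - u = 2*d := by rw [hd_def]; ring
    nlinarith [h1, h2]
  have hkey : 1 / ((y:ℝ)^2 * (2*(M:ℝ)+1)^4) ≤ u * (v - u) / 4 := by
    have hvu : v - u = π * (b - a) / (a * b) := by
      rw [hv_def, hu_def]; field_simp
    have heq : u * (v - u) / 4 = π^2 * (b - a) / (4 * (a * b^2)) := by
      rw [hu_def, hvu]; field_simp
    rw [heq, div_le_div_iff₀ (by positivity) (by positivity)]
    have hy0 : (0:ℝ) < (y:ℝ) := by linarith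
    have hM0 : (0:ℝ) < 2*(M:ℝ)+1 := by linarith
    have hb2 : b^2 ≤ (2*L)^2 := pow_le_pow_left₀ hb0.le hbL 2
    have habb : a * b^2 ≤ 8 * L^3 := by
      calc a * b^2 ≤ (2*L) * (2*L)^2 :=
            mul_le_mul haL hb2 (by positivity) (by positivity)
        _ = 8 * L^3 := by ring
    have hpisq : (9:ℝ) ≤ π^2 := by nlinarith
    have h18 : 18*(y:ℝ) ≤ π^2*(b-a) := by
      linarith [mul_nonneg (show (0:ℝ) ≤ π^2 - 9 by linarith) (show (0:ℝ) ≤ b - a by linarith)]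
    have hR : 18*(y:ℝ)*((y:ℝ)^2*(2*(M:ℝ)+1)^4) ≤ π^2*(b-a)*((y:ℝ)^2*(2*(M:ℝ)+1)^4) :=
      mul_le_mul_of_nonneg_right h18 (by positivity)
    have hmid : 32 * L^3 ≤ 18*(y:ℝ)*((y:ℝ)^2*(2*(M:ℝ)+1)^4) := by
      rw [hL_def]
      linarith [mul_nonneg (mul_nonneg (pow_nonneg hM0.le 3) (pow_nonneg hy0.le 3))
        (show (0:ℝ) ≤ 18*(2*(M:ℝ)+1) - 32 by linarith)]
    linarith [habb, hmid, hR]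
  linarith

/-- Recovering an integer from an approximate eigenvalue: for an integer `y ≥ 40` and
`g(T) = 1 - cos(π/((2T+1)y+1))`, distinct integers `T, T' ∈ {4,…,M}` satisfy
`|g(T) - g(T')| ≥ 1/(y²(2M+1)⁴)`; consequently, any `E` with
`|E - g(T)| ≤ 1/(2y²(2M+1)⁴)` determines `T` uniquely among `{4,…,M}`. -/
theorem stmt19 (y M T T' : ℕ) (hy : 40 ≤ y)
    (hT4 : 4 ≤ T) (hTM : T ≤ M) (hT'4 : 4 ≤ T') (hT'M : T' ≤ M) (hne : T ≠ T')
    (g : ℕ → ℝ)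
    (hg : ∀ t : ℕ, g t = 1 - Real.cos (Real.pi / ((2 * (t : ℝ) + 1) * (y : ℝ) + 1))) :
    (1 / ((y : ℝ) ^ 2 * (2 * (M : ℝ) + 1) ^ 4) ≤ |g T - g T'|) ∧
    (∀ E : ℝ, |E - g T| ≤ 1 / (2 * (y : ℝ) ^ 2 * (2 * (M : ℝ) + 1) ^ 4) →
      ∀ T'' : ℕ, 4 ≤ T'' → T'' ≤ M →
        |E - g T''| ≤ 1 / (2 * (y : ℝ) ^ 2 * (2 * (M : ℝ) + 1) ^ 4) → T'' = T) := by
  have hM : 4 ≤ M := le_trans hT4 hTM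
  have hsep : ∀ S S' : ℕ, 4 ≤ S → S ≤ M → 4 ≤ S' → S' ≤ M → S ≠ S' →
      1 / ((y:ℝ)^2 * (2*(M:ℝ)+1)^4) < |g S - g S'| := by
    intro S S' h1 h2 h3 h4 hne'
    rcases lt_or_gt_of_ne hne' with h | h
    · have hs := sep' y M S S' hy h1 h4 h hM
      rw [hg S, hg S']
      calc 1 / ((y:ℝ)^2 * (2*(M:ℝ)+1)^4)
          < Real.cos (Real.pi / ((2*(S':ℝ)+1)*(y:ℝ)+1)) - Real.cos (Real.pi / ((2*(S:ℝ)+1)*(y:ℝ)+1)) := hs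
        _ = (1 - Real.cos (Real.pi / ((2*(S:ℝ)+1)*(y:ℝ)+1))) - (1 - Real.cos (Real.pi / ((2*(S':ℝ)+1)*(y:ℝ)+1))) := by ring
        _ ≤ |(1 - Real.cos (Real.pi / ((2*(S:ℝ)+1)*(y:ℝ)+1))) - (1 - Real.cos (Real.pi / ((2*(S':ℝ)+1)*(y:ℝ)+1)))| := le_abs_self _
    · have hs := sep' y M S' S hy h3 h2 h hM
      rw [hg S, hg S', abs_sub_comm]
      calc 1 / ((y:ℝ)^2 * (2*(M:ℝ)+1)^4)
          < Real.cos (Real.pi / ((2*(S:ℝ)+1)*(y:ℝ)+1)) - Real.cos (Real.pi / ((2*(S':ℝ)+1)*(y:ℝ)+1)) := hs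
        _ = (1 - Real.cos (Real.pi / ((2*(S':ℝ)+1)*(y:ℝ)+1))) - (1 - Real.cos (Real.pi / ((2*(S:ℝ)+1)*(y:ℝ)+1))) := by ring
        _ ≤ |(1 - Real.cos (Real.pi / ((2*(S':ℝ)+1)*(y:ℝ)+1))) - (1 - Real.cos (Real.pi / ((2*(S:ℝ)+1)*(y:ℝ)+1)))| := le_abs_self _
  constructor
  · exact (hsep T T' hT4 hTM hT'4 hT'M hne).le
  · intro E hE T'' h4'' hM'' hE''
    by_contra hneq
    have hsep2 := hsep T T'' hT4 hTM h4'' hM'' (fun h => hneq h.symm)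
    have htri : |g T - g T''| ≤ |g T - E| + |E - g T''| := abs_sub_le _ _ _
    rw [abs_sub_comm (g T) E] at htri
    have hc : ((y:ℝ)^2*(2*(M:ℝ)+1)^4) ≠ 0 := by positivity
    have h2 : 1 / (2 * (y:ℝ)^2 * (2*(M:ℝ)+1)^4) = (1 / ((y:ℝ)^2 * (2*(M:ℝ)+1)^4)) / 2 := by
      field_simp
    rw [h2] at hE hE''
    linarith
end
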